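/- Simultaneous elliptic shift of both elliptic variables: for every ℓ_d ∈ Λ_d one has Φ_{μ,ν}(τ, u+ℓ_d τ, v+ℓ_d τ, {d_r}) = e^{−πiτ Q(ℓ_d)} · e^{−2πi B(v,ℓ_d)} · Φ_{μ,ν}(τ, u, v, {d_r}). -/
import Mathlib


open scoped BigOperators Real
open Complex

/-- The complex bilinear form `B(x,y) = xᵀ 𝐀 y` attached to an integer matrix `𝐀`,
extended bilinearly to `ℂ^N`. -/
noncomputable def bilC {N : ℕ} (A : Matrix (Fin N) (Fin N) ℤ) (x y : Fin N → ℂ) : ℂ :=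
  ∑ i, ∑ j, x i * (A i j : ℂ) * y j

/-- The real bilinear form `B(x,y) = xᵀ 𝐀 y`. -/
noncomputable def bilR {N : ℕ} (A : Matrix (Fin N) (Fin N) ℤ) (x y : Fin N → ℝ) : ℝ :=
  ∑ i, ∑ j, x i * (A i j : ℝ) * y j

/-- The generalized Appell function `Φ_{μ,ν}(τ,u,v,{d_r})`:
`e^{2πi B(ν,u)} · Σ_{k ∈ ℤ^N} e^{πiτ Q(k+μ−ν) + 2πiτ B(ν,k+μ−ν) + 2πi B(v,k+μ−ν)}
  / ∏_{r=1}^M (1 − e^{2πi B(d_r,u)} e^{2πiτ B(d_r,k+μ−ν)})`. -/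
noncomputable def appellPhi {N M : ℕ} (A : Matrix (Fin N) (Fin N) ℤ)
    (d : Fin M → Fin N → ℤ) (τ : ℂ) (u v : Fin N → ℂ) (μ ν : Fin N → ℝ) : ℂ :=
  Complex.exp (2 * (π : ℂ) * I * bilC A (fun i => (ν i : ℂ)) u) *
  ∑' k : Fin N → ℤ,
    Complex.exp ((π : ℂ) * I * τ *
        bilC A (fun i => (k i : ℂ) + (μ i : ℂ) - (ν i : ℂ))
               (fun i => (k i : ℂ) + (μ i : ℂ) - (ν i : ℂ))
      + 2 * (π : ℂ) * I * τ *
        bilC A (fun i => (ν i : ℂ)) (fun i => (k i : ℂ) + (μ i : ℂ) - (ν i : ℂ))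
      + 2 * (π : ℂ) * I *
        bilC A v (fun i => (k i : ℂ) + (μ i : ℂ) - (ν i : ℂ))) /
    ∏ r, (1 - Complex.exp (2 * (π : ℂ) * I * bilC A (fun i => (d r i : ℂ)) u) *
      Complex.exp (2 * (π : ℂ) * I * τ *
        bilC A (fun i => (d r i : ℂ)) (fun i => (k i : ℂ) + (μ i : ℂ) - (ν i : ℂ))))

/-- Auxiliary: the `k`-th summand of the Appell function. -/
noncomputable def appellTerm {N M : ℕ} (A : Matrix (Fin N) (Fin N) ℤ)
    (d : Fin M → Fin N → ℤ) (τ : ℂ) (u v : Fin N → ℂ) (μ ν : Fin N → ℝ)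
    (k : Fin N → ℤ) : ℂ :=
  Complex.exp ((π : ℂ) * I * τ *
        bilC A (fun i => (k i : ℂ) + (μ i : ℂ) - (ν i : ℂ))
               (fun i => (k i : ℂ) + (μ i : ℂ) - (ν i : ℂ))
      + 2 * (π : ℂ) * I * τ *
        bilC A (fun i => (ν i : ℂ)) (fun i => (k i : ℂ) + (μ i : ℂ) - (ν i : ℂ))
      + 2 * (π : ℂ) * I *
        bilC A v (fun i => (k i : ℂ) + (μ i : ℂ) - (ν i : ℂ))) /
    ∏ r, (1 - Complex.exp (2 * (π : ℂ) * I * bilC A (fun i => (d r i : ℂ)) u) *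
      Complex.exp (2 * (π : ℂ) * I * τ *
        bilC A (fun i => (d r i : ℂ)) (fun i => (k i : ℂ) + (μ i : ℂ) - (ν i : ℂ))))

lemma appellPhi_eq_tsum {N M : ℕ} (A : Matrix (Fin N) (Fin N) ℤ)
    (d : Fin M → Fin N → ℤ) (τ : ℂ) (u v : Fin N → ℂ) (μ ν : Fin N → ℝ) :
    appellPhi A d τ u v μ ν =
      Complex.exp (2 * (π : ℂ) * I * bilC A (fun i => (ν i : ℂ)) u) *
        ∑' k : Fin N → ℤ, appellTerm A d τ u v μ ν k := rfl

lemma bilC_add_right' {N : ℕ} (A : Matrix (Fin N) (Fin N) ℤ) (x y z : Fin N → ℂ) :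
    bilC A x (fun i => y i + z i) = bilC A x y + bilC A x z := by
  unfold bilC
  rw [← Finset.sum_add_distrib]
  refine Finset.sum_congr rfl fun i _ => ?_
  rw [← Finset.sum_add_distrib]
  exact Finset.sum_congr rfl fun j _ => by ring

lemma bilC_add_left' {N : ℕ} (A : Matrix (Fin N) (Fin N) ℤ) (x y z : Fin N → ℂ) :
    bilC A (fun i => x i + y i) z = bilC A x z + bilC A y z := by
  unfold bilC
  rw [← Finset.sum_add_distrib]
  refine Finset.sum_congr rfl fun i _ => ?_
  rw [← Finset.sum_add_distrib]
  exact Finset.sum_congr rfl fun j _ => by ring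

lemma bilC_mul_right' {N : ℕ} (A : Matrix (Fin N) (Fin N) ℤ) (c : ℂ) (x y : Fin N → ℂ) :
    bilC A x (fun i => y i * c) = bilC A x y * c := by
  unfold bilC
  rw [Finset.sum_mul]
  refine Finset.sum_congr rfl fun i _ => ?_
  rw [Finset.sum_mul]
  exact Finset.sum_congr rfl fun j _ => by ring

lemma bilC_mul_left' {N : ℕ} (A : Matrix (Fin N) (Fin N) ℤ) (c : ℂ) (x y : Fin N → ℂ) :
    bilC A (fun i => x i * c) y = bilC A x y * c := by
  unfold bilC
  rw [Finset.sum_mul]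
  refine Finset.sum_congr rfl fun i _ => ?_
  rw [Finset.sum_mul]
  exact Finset.sum_congr rfl fun j _ => by ring

lemma bilC_symm' {N : ℕ} (A : Matrix (Fin N) (Fin N) ℤ) (h : A.IsSymm)
    (x y : Fin N → ℂ) : bilC A x y = bilC A y x := by
  unfold bilC
  rw [Finset.sum_comm]
  refine Finset.sum_congr rfl fun j _ => Finset.sum_congr rfl fun i _ => ?_
  have hij : A i j = A j i := h.apply j i
  rw [hij]; ring

/-- The key term-by-term identity for the simultaneous elliptic shift. -/
lemma appellTerm_shift {N M : ℕ} (A : Matrix (Fin N) (Fin N) ℤ) (hAsymm : A.IsSymm)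
    (d : Fin M → Fin N → ℤ) (τ : ℂ) (u v : Fin N → ℂ) (μ ν : Fin N → ℝ)
    (ℓd : Fin N → ℤ) (k : Fin N → ℤ) :
    appellTerm A d τ (fun i => u i + (ℓd i : ℂ) * τ) (fun i => v i + (ℓd i : ℂ) * τ) μ ν k
      = Complex.exp (-((π : ℂ) * I * τ *
            bilC A (fun i => (ℓd i : ℂ)) (fun i => (ℓd i : ℂ)))
          - 2 * (π : ℂ) * I * bilC A v (fun i => (ℓd i : ℂ))
          - 2 * (π : ℂ) * I * τ * bilC A (fun i => (ν i : ℂ)) (fun i => (ℓd i : ℂ))) *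
        appellTerm A d τ u v μ ν (k + ℓd) := by
  have hm : (fun i => (((k + ℓd) i : ℤ) : ℂ) + (μ i : ℂ) - (ν i : ℂ))
      = fun i => ((k i : ℂ) + (μ i : ℂ) - (ν i : ℂ)) + (ℓd i : ℂ) := by
    funext i
    simp only [Pi.add_apply, Int.cast_add]
    ring
  unfold appellTerm
  rw [hm]
  simp only [bilC_add_right', bilC_add_left', bilC_mul_right', bilC_mul_left']
  rw [bilC_symm' A hAsymm (fun i => (k i : ℂ) + (μ i : ℂ) - (ν i : ℂ))
      (fun i => (ℓd i : ℂ))]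
  rw [← mul_div_assoc, ← Complex.exp_add]
  congr 1
  · congr 1
    ring
  · refine Finset.prod_congr rfl fun r _ => ?_
    congr 1
    rw [← Complex.exp_add, ← Complex.exp_add]
    congr 1
    ring

/-- Simultaneous elliptic shift of both elliptic variables: for every `ℓ_d ∈ Λ_d`,
`Φ_{μ,ν}(τ, u+ℓ_d τ, v+ℓ_d τ, {d_r})
  = e^{−πiτ Q(ℓ_d)} · e^{−2πi B(v,ℓ_d)} · Φ_{μ,ν}(τ, u, v, {d_r})`. -/
theorem appellPhi_elliptic_shift
    {N M : ℕ} (hN : 1 ≤ N) (hM : 1 ≤ M) (hMN : M ≤ N)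
    (A : Matrix (Fin N) (Fin N) ℤ) (hAsymm : A.IsSymm)
    (hApos : (A.map ((↑) : ℤ → ℝ)).PosDef)
    (d : Fin M → Fin N → ℤ)
    (hd : LinearIndependent ℝ (fun r => fun i => (d r i : ℝ)))
    (τ : ℂ) (hτ : 0 < τ.im) (u v : Fin N → ℂ)
    (μ ν : Fin N → ℝ)
    (hν : ν ∈ Submodule.span ℝ (Set.range (fun r => fun i => (d r i : ℝ))))
    (ℓd : Fin N → ℤ) (hℓd : ℓd ∈ Submodule.span ℤ (Set.range d)) :
    appellPhi A d τ (fun i => u i + (ℓd i : ℂ) * τ) (fun i => v i + (ℓd i : ℂ) * τ) μ ν =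
      Complex.exp (-((π : ℂ) * I * τ *
        bilC A (fun i => (ℓd i : ℂ)) (fun i => (ℓd i : ℂ)))) *
      Complex.exp (-(2 * (π : ℂ) * I * bilC A v (fun i => (ℓd i : ℂ)))) *
      appellPhi A d τ u v μ ν := by
  rw [appellPhi_eq_tsum, appellPhi_eq_tsum]
  rw [tsum_congr (appellTerm_shift A hAsymm d τ u v μ ν ℓd)]
  rw [tsum_mul_left]
  rw [show (∑' k : Fin N → ℤ, appellTerm A d τ u v μ ν (k + ℓd))
      = ∑' k : Fin N → ℤ, appellTerm A d τ u v μ ν k from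
    (Equiv.addRight ℓd).tsum_eq (appellTerm A d τ u v μ ν)]
  rw [bilC_add_right', bilC_mul_right']
  have h1 : ∀ a b s : ℂ, Complex.exp a * (Complex.exp b * s) = Complex.exp (a + b) * s :=
    fun a b s => by rw [Complex.exp_add]; ring
  have h2 : ∀ a b c s : ℂ,
      Complex.exp a * Complex.exp b * (Complex.exp c * s) = Complex.exp (a + b + c) * s :=
    fun a b c s => by rw [Complex.exp_add, Complex.exp_add]; ring
  rw [h1, h2]
  congr 2
  ring
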